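/- Let 𝒮 be an injective split system on a finite set X with |X| ≥ 4 whose non-trivial splits all have size 2. (i) If P(𝒮) does not contain a 3-clique, then dim(𝒮) = max_{x ∈ X} deg_{P(𝒮)}(x). (ii) If P(𝒮) contains a 3-clique, then dim(𝒮) = max( max_{x ∈ X} deg_{P(𝒮)}(x), 3 ). -/

import Mathlib

namespace InjectiveSplitSystems

open Finset

variable {α : Type*} [DecidableEq α]

/-- A split of `X`: an unordered bipartition of `X` into two nonempty disjoint parts,
represented as the two-element set `{A, B}` of its parts. -/
def IsSplit (X : Finset α) (S : Finset (Finset α)) : Prop :=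
  ∃ A B : Finset α, S = {A, B} ∧ A ∪ B = X ∧ A ∩ B = ∅ ∧ A ≠ ∅ ∧ B ≠ ∅

/-- `S` is an `r`-split of `X`: a split of `X` whose minimum part size is `r`. -/
def IsRSplit (X : Finset α) (r : ℕ) (S : Finset (Finset α)) : Prop :=
  IsSplit X S ∧ (∃ A ∈ S, A.card = r) ∧ ∀ A ∈ S, r ≤ A.card

/-- A split system on `X`: a set of splits of `X` containing all trivial splits
`{x} | X \ {x}`, `x ∈ X`. -/
def IsSplitSystem (X : Finset α) (𝒮 : Finset (Finset (Finset α))) : Prop :=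
  (∀ S ∈ 𝒮, IsSplit X S) ∧ ∀ x ∈ X, ({{x}, X \ {x}} : Finset (Finset α)) ∈ 𝒮

/-- `phiNe Y Y' S` says `φ_Y(S) ≠ φ_{Y'}(S)`: the part of `S` containing at least two
elements of the 3-set `Y` differs from the part of `S` containing at least two
elements of the 3-set `Y'`. -/
def phiNe (Y Y' : Finset α) (S : Finset (Finset α)) : Prop :=
  ∃ t ∈ S, ∃ t' ∈ S, t ≠ t' ∧ 2 ≤ (Y ∩ t).card ∧ 2 ≤ (Y' ∩ t').card

/-- A split system on `X` is injective if for all distinct 3-subsets `Y`, `Y'` of `X`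
there is a split `S ∈ 𝒮` with `φ_Y(S) ≠ φ_{Y'}(S)`. -/
def IsInjective (X : Finset α) (𝒮 : Finset (Finset (Finset α))) : Prop :=
  ∀ Y Y' : Finset α, Y ⊆ X → Y' ⊆ X → Y.card = 3 → Y'.card = 3 → Y ≠ Y' →
    ∃ S ∈ 𝒮, phiNe Y Y' S

/-- The restriction `S|_Y` of a split to `Y`, as the set of restricted parts. -/
def restrictSplit (S : Finset (Finset α)) (Y : Finset α) : Finset (Finset α) :=
  S.image (· ∩ Y)

open scoped Classical in
/-- The restriction `𝒮|_Y` of a split system to `Y`: all splits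
`(A ∩ Y) | (B ∩ Y)` with `A|B ∈ 𝒮` and both intersections nonempty. -/
noncomputable def restrictSS (𝒮 : Finset (Finset (Finset α))) (Y : Finset α) :
    Finset (Finset (Finset α)) :=
  (𝒮.image fun S => restrictSplit S Y).filter fun T => ∀ t ∈ T, t ≠ ∅

/-- `𝒮` 4-dices `X`. -/
def FourDices (X : Finset α) (𝒮 : Finset (Finset (Finset α))) : Prop :=
  X.card < 4 ∨ ∀ Y ⊆ X, Y.card = 4 →
    ∃ 𝒯 ⊆ restrictSS 𝒮 Y, 2 ≤ 𝒯.card ∧ ∀ S ∈ 𝒯, IsRSplit Y 2 S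

/-- `𝒮` 5-dices `X`. -/
def FiveDices (X : Finset α) (𝒮 : Finset (Finset (Finset α))) : Prop :=
  X.card < 5 ∨ ∀ Y ⊆ X, Y.card = 5 →
    ∃ 𝒯 ⊆ restrictSS 𝒮 Y, 5 ≤ 𝒯.card ∧ ∀ S ∈ 𝒯, IsRSplit Y 2 S

/-- `𝒮` 6-dices `X`: every 6-subset restriction contains a 3-split or a triangle
of 2-splits. -/
def SixDices (X : Finset α) (𝒮 : Finset (Finset (Finset α))) : Prop :=
  X.card < 6 ∨ ∀ Y ⊆ X, Y.card = 6 →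
    (∃ S ∈ restrictSS 𝒮 Y, IsRSplit Y 3 S) ∨
    (∃ x ∈ Y, ∃ y ∈ Y, ∃ z ∈ Y, x ≠ y ∧ x ≠ z ∧ y ≠ z ∧
      ({{x, y}, Y \ {x, y}} : Finset (Finset α)) ∈ restrictSS 𝒮 Y ∧
      ({{x, z}, Y \ {x, z}} : Finset (Finset α)) ∈ restrictSS 𝒮 Y ∧
      ({{y, z}, Y \ {y, z}} : Finset (Finset α)) ∈ restrictSS 𝒮 Y)

/-- Two splits are incompatible if they are distinct and all four pairwise
intersections of their parts are nonempty. -/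
def Incompatible (S T : Finset (Finset α)) : Prop :=
  S ≠ T ∧ ∀ A ∈ S, ∀ B ∈ T, A ∩ B ≠ ∅

open scoped Classical in
/-- The dimension of a split system: maximum size of a pairwise incompatible subset
(which is `1` when all splits are pairwise compatible and `𝒮` is nonempty). -/
noncomputable def dimSS (𝒮 : Finset (Finset (Finset α))) : ℕ :=
  (𝒮.powerset.filter fun 𝒯 => ∀ S ∈ 𝒯, ∀ T ∈ 𝒯, S ≠ T → Incompatible S T).sup Finset.card

/-- The injective dimension `ID(n)`: minimum dimension of an injective split system
on `{1, …, n}`. -/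
noncomputable def ID (n : ℕ) : ℕ :=
  sInf {d : ℕ | ∃ 𝒮 : Finset (Finset (Finset ℕ)),
    IsSplitSystem (Finset.Icc 1 n) 𝒮 ∧ IsInjective (Finset.Icc 1 n) 𝒮 ∧ dimSS 𝒮 = d}

/-- The injective 2-split dimension `ID₂(n)`: minimum dimension of an injective split
system on `{1, …, n}` all of whose non-trivial splits have size 2. -/
noncomputable def ID2 (n : ℕ) : ℕ :=
  sInf {d : ℕ | ∃ 𝒮 : Finset (Finset (Finset ℕ)),
    IsSplitSystem (Finset.Icc 1 n) 𝒮 ∧ IsInjective (Finset.Icc 1 n) 𝒮 ∧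
    (∀ S ∈ 𝒮, IsRSplit (Finset.Icc 1 n) 1 S ∨ IsRSplit (Finset.Icc 1 n) 2 S) ∧
    dimSS 𝒮 = d}

/-- `𝒮` is rooted-injective relative to `r`. -/
def IsRootedInjective (X : Finset α) (r : α) (𝒮 : Finset (Finset (Finset α))) : Prop :=
  ∀ Z Z' : Finset α, Z ⊆ X \ {r} → Z' ⊆ X \ {r} → Z.card = 2 → Z'.card = 2 → Z ≠ Z' →
    ∃ S ∈ 𝒮, phiNe (insert r Z) (insert r Z') S

/-- The rooted-injective dimension `ID^r(n)`: minimum dimension of a split system on an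
`n`-element set that is rooted-injective relative to a given element. -/
noncomputable def IDr (n : ℕ) : ℕ :=
  sInf {d : ℕ | ∃ 𝒮 : Finset (Finset (Finset ℕ)),
    IsSplitSystem (Finset.Icc 1 n) 𝒮 ∧ IsRootedInjective (Finset.Icc 1 n) 1 𝒮 ∧
    dimSS 𝒮 = d}

/-- `𝒮` is circular: there is a labelling `x_1, …, x_n` of `X` such that every split
of `𝒮` has the form `{x_i, …, x_j} | complement`. -/
def IsCircular (X : Finset α) (𝒮 : Finset (Finset (Finset α))) : Prop :=
  ∃ f : ℕ → α, Set.InjOn f ↑(Finset.Icc 1 X.card) ∧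
    (Finset.Icc 1 X.card).image f = X ∧
    ∀ S ∈ 𝒮, ∃ i j : ℕ, 1 ≤ i ∧ i ≤ j ∧ j ≤ X.card ∧
      S = {(Finset.Icc i j).image f, X \ (Finset.Icc i j).image f}

/-- `𝒮` is maximal circular: circular and not properly contained in any circular
split system on `X`. -/
def IsMaximalCircular (X : Finset α) (𝒮 : Finset (Finset (Finset α))) : Prop :=
  IsCircular X 𝒮 ∧ ∀ 𝒮' : Finset (Finset (Finset α)),
    IsSplitSystem X 𝒮' → IsCircular X 𝒮' → 𝒮 ⊆ 𝒮' → 𝒮' = 𝒮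

/-- The degree of `x` in the graph `P(𝒮)` on vertex set `X` whose edges are the
pairs `{x, y}` with `xy | X − {x,y} ∈ 𝒮`. -/
def degP (X : Finset α) (𝒮 : Finset (Finset (Finset α))) (x : α) : ℕ :=
  ((X \ {x}).filter fun y => ({{x, y}, X \ {x, y}} : Finset (Finset α)) ∈ 𝒮).card

/-- `P(𝒮)` contains a 3-clique. -/
def HasTriangle (X : Finset α) (𝒮 : Finset (Finset (Finset α))) : Prop :=
  ∃ x ∈ X, ∃ y ∈ X, ∃ z ∈ X, x ≠ y ∧ x ≠ z ∧ y ≠ z ∧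
    ({{x, y}, X \ {x, y}} : Finset (Finset α)) ∈ 𝒮 ∧
    ({{x, z}, X \ {x, z}} : Finset (Finset α)) ∈ 𝒮 ∧
    ({{y, z}, X \ {y, z}} : Finset (Finset α)) ∈ 𝒮

/-- Conditions (B1) and (B2) for a map to be a vertex of the Buneman graph. -/
def IsBunemanVertex (𝒮 : Finset (Finset (Finset α))) (φ : {S // S ∈ 𝒮} → Finset α) : Prop :=
  (∀ S, φ S ∈ S.1) ∧ ∀ S S', S ≠ S' → (φ S ∩ φ S').Nonempty

/-- The vertex set of the Buneman graph `B(𝒮)`. -/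
abbrev BunemanVertex (𝒮 : Finset (Finset (Finset α))) : Type _ :=
  {φ : {S // S ∈ 𝒮} → Finset α // IsBunemanVertex 𝒮 φ}

/-- The Buneman graph `B(𝒮)`: two vertices are adjacent iff they differ on exactly
one split. -/
def BunemanGraph (𝒮 : Finset (Finset (Finset α))) : SimpleGraph (BunemanVertex 𝒮) where
  Adj φ ψ := ∃! S, φ.1 S ≠ ψ.1 S
  symm := by
    constructor
    rintro φ ψ ⟨S, hS, hU⟩
    exact ⟨S, hS.symm, fun T hT => hU T hT.symm⟩
  loopless := by
    constructor
    rintro φ ⟨S, hS, -⟩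
    exact hS rfl

/-- `m` is a median of `u`, `v`, `w` in the graph `G`. -/
def IsMedian {V : Type*} (G : SimpleGraph V) (u v w m : V) : Prop :=
  G.dist u m + G.dist m v = G.dist u v ∧
  G.dist v m + G.dist m w = G.dist v w ∧
  G.dist u m + G.dist m w = G.dist u w


lemma pair_eq_of_mem' {e : Finset α} {a b : α} (h : e.card = 2) (ha : a ∈ e) (hb : b ∈ e)
    (hab : a ≠ b) : e = {a, b} := by
  symm
  apply Finset.eq_of_subset_of_card_le
  · exact Finset.insert_subset ha (Finset.singleton_subset_iff.2 hb)
  · rw [h, Finset.card_pair hab]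

lemma exists_pair_of_card_two_of_mem {e : Finset α} {a : α} (h : e.card = 2) (ha : a ∈ e) :
    ∃ b, b ≠ a ∧ e = {a, b} := by
  obtain ⟨u, v, huv, rfl⟩ := Finset.card_eq_two.1 h
  rcases Finset.mem_insert.1 ha with rfl | hv
  · exact ⟨v, fun h => huv h.symm, rfl⟩
  · rw [Finset.mem_singleton] at hv; subst hv
    exact ⟨u, huv, Finset.pair_comm _ _⟩

lemma sdiff_inter_nonempty {X P Q : Finset α} (hX : 4 ≤ X.card) (hP : P.card ≤ 2)
    (hQ : Q.card ≤ 2) (hPQ : (P ∩ Q).Nonempty) : ((X \ P) ∩ (X \ Q)).Nonempty := by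
  have h1 : (X \ P) ∩ (X \ Q) = X \ (P ∪ Q) := by
    ext z; simp only [Finset.mem_inter, Finset.mem_sdiff, Finset.mem_union]; tauto
  rw [h1, ← Finset.card_pos]
  have h2 : (P ∪ Q).card + (P ∩ Q).card = P.card + Q.card := Finset.card_union_add_card_inter P Q
  have h3 : 1 ≤ (P ∩ Q).card := Finset.card_pos.2 hPQ
  have h4 : X.card - (P ∪ Q).card ≤ (X \ (P ∪ Q)).card := Finset.le_card_sdiff _ _
  omega

/-- Two 2-splits whose 2-sets are distinct but intersecting are incompatible. -/
lemma inc_pairs {X : Finset α} (hX : 4 ≤ X.card) {a b c d : α}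
    (ha : a ∈ X) (hb : b ∈ X) (hc : c ∈ X) (hd : d ∈ X)
    (hab : a ≠ b) (hcd : c ≠ d) (hne : ({a, b} : Finset α) ≠ {c, d})
    (hint : (({a, b} : Finset α) ∩ {c, d}).Nonempty) :
    Incompatible ({{a, b}, X \ {a, b}} : Finset (Finset α)) {{c, d}, X \ {c, d}} := by
  have hPX : ({a, b} : Finset α) ⊆ X := Finset.insert_subset ha (by simpa using hb)
  have hQX : ({c, d} : Finset α) ⊆ X := Finset.insert_subset hc (by simpa using hd)
  have hPcard : ({a, b} : Finset α).card = 2 := Finset.card_pair hab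
  have hQcard : ({c, d} : Finset α).card = 2 := Finset.card_pair hcd
  have hPQ : (({a, b} : Finset α) ∩ (X \ {c, d})).Nonempty := by
    by_contra h
    rw [Finset.not_nonempty_iff_eq_empty] at h
    apply hne
    apply Finset.eq_of_subset_of_card_le _ (by rw [hPcard, hQcard])
    intro z hz
    by_contra hz'
    exact Finset.notMem_empty z (h ▸ Finset.mem_inter.2 ⟨hz, Finset.mem_sdiff.2 ⟨hPX hz, hz'⟩⟩)
  have hQP : ((X \ {a, b}) ∩ ({c, d} : Finset α)).Nonempty := by
    by_contra h
    rw [Finset.not_nonempty_iff_eq_empty] at h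
    apply hne.symm
    apply Finset.eq_of_subset_of_card_le _ (by rw [hPcard, hQcard])
    intro z hz
    by_contra hz'
    exact Finset.notMem_empty z
      (h ▸ Finset.mem_inter.2 ⟨Finset.mem_sdiff.2 ⟨hQX hz, hz'⟩, hz⟩)
  have hcompl : ((X \ {a, b}) ∩ (X \ {c, d})).Nonempty :=
    sdiff_inter_nonempty hX hPcard.le hQcard.le hint
  constructor
  · intro h
    have h1 : ({a, b} : Finset α) ∈ ({{c, d}, X \ {c, d}} : Finset (Finset α)) := by
      rw [← h]; exact Finset.mem_insert_self _ _
    rcases Finset.mem_insert.1 h1 with h2 | h2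
    · exact hne h2
    · rw [Finset.mem_singleton] at h2
      obtain ⟨z, hz⟩ := hint
      rw [Finset.mem_inter] at hz
      have := h2 ▸ hz.1
      exact (Finset.mem_sdiff.1 this).2 hz.2
  · intro A hA B hB
    rw [← Finset.nonempty_iff_ne_empty]
    rcases Finset.mem_insert.1 hA with rfl | hA' <;>
      [skip; rw [Finset.mem_singleton] at hA'] <;>
      rcases Finset.mem_insert.1 hB with rfl | hB' <;>
      [skip; rw [Finset.mem_singleton] at hB'; skip; rw [Finset.mem_singleton] at hB']
    · exact hint
    · subst hB'; exact hPQ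
    · subst hA'; exact hQP
    · subst hA'; subst hB'; exact hcompl

/-- Every 2-split has the form `{P, X \ P}` with `P` a 2-subset of `X`. -/
lemma rsplit2_form {X : Finset α} {S : Finset (Finset α)} (h : IsRSplit X 2 S) :
    ∃ P : Finset α, P ∈ S ∧ P.card = 2 ∧ P ⊆ X ∧ S = {P, X \ P} := by
  obtain ⟨⟨A, B, rfl, hU, hI, hA, hB⟩, ⟨P, hP, hPcard⟩, -⟩ := h
  have hBA : B = (A ∪ B) \ A := by
    ext z
    simp only [Finset.mem_sdiff, Finset.mem_union]
    constructor
    · intro hz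
      refine ⟨Or.inr hz, fun hzA => ?_⟩
      have : z ∈ A ∩ B := Finset.mem_inter.2 ⟨hzA, hz⟩
      simp [hI] at this
    · rintro ⟨hz | hz, hzA⟩
      · exact absurd hz hzA
      · exact hz
  have hAB : A = (A ∪ B) \ B := by
    ext z
    simp only [Finset.mem_sdiff, Finset.mem_union]
    constructor
    · intro hz
      refine ⟨Or.inl hz, fun hzB => ?_⟩
      have : z ∈ A ∩ B := Finset.mem_inter.2 ⟨hz, hzB⟩
      simp [hI] at this
    · rintro ⟨hz | hz, hzB⟩
      · exact hz
      · exact absurd hz hzB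
  rcases Finset.mem_insert.1 hP with rfl | hP'
  · exact ⟨P, hP, hPcard, hU ▸ Finset.subset_union_left, by rw [← hU, ← hBA]⟩
  · rw [Finset.mem_singleton] at hP'
    subst hP'
    refine ⟨P, hP, hPcard, hU ▸ Finset.subset_union_right, ?_⟩
    rw [← hU, ← hAB, Finset.pair_comm]

/-- A family of pairwise-intersecting 2-sets is a star or a triangle. -/
lemma star_or_triangle (x0 : α) (ℰ : Finset (Finset α)) (h2 : ∀ e ∈ ℰ, e.card = 2)
    (hint : ∀ e ∈ ℰ, ∀ f ∈ ℰ, (e ∩ f).Nonempty) :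
    (∃ x, ∀ e ∈ ℰ, x ∈ e) ∨
    (∃ x y z : α, x ≠ y ∧ x ≠ z ∧ y ≠ z ∧
      ℰ = {({x, y} : Finset α), {x, z}, {y, z}}) := by
  by_cases hst : ∃ x, ∀ e ∈ ℰ, x ∈ e
  · exact Or.inl hst
  push_neg at hst
  rcases Finset.eq_empty_or_nonempty ℰ with rfl | ⟨e, he⟩
  · exact Or.inl ⟨x0, by simp⟩
  obtain ⟨a, b, hab, hEab⟩ := Finset.card_eq_two.1 (h2 e he)
  subst hEab
  obtain ⟨f, hf, haf⟩ := hst a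
  have hbf : b ∈ f := by
    obtain ⟨z, hz⟩ := hint _ he f hf
    rw [Finset.mem_inter] at hz
    rcases Finset.mem_insert.1 hz.1 with rfl | hz1
    · exact absurd hz.2 haf
    · rw [Finset.mem_singleton] at hz1; subst hz1; exact hz.2
  obtain ⟨c, hcb, hfbc⟩ := exists_pair_of_card_two_of_mem (h2 f hf) hbf
  subst hfbc
  have hca : c ≠ a := by rintro rfl; exact haf (by simp)
  obtain ⟨g, hg, hbg⟩ := hst b
  have hag : a ∈ g := by
    obtain ⟨z, hz⟩ := hint _ he g hg
    rw [Finset.mem_inter] at hz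
    rcases Finset.mem_insert.1 hz.1 with rfl | hz1
    · exact hz.2
    · rw [Finset.mem_singleton] at hz1; subst hz1; exact absurd hz.2 hbg
  have hcg : c ∈ g := by
    obtain ⟨z, hz⟩ := hint _ hf g hg
    rw [Finset.mem_inter] at hz
    rcases Finset.mem_insert.1 hz.1 with rfl | hz1
    · exact absurd hz.2 hbg
    · rw [Finset.mem_singleton] at hz1; subst hz1; exact hz.2
  have hgac : g = {a, c} := pair_eq_of_mem' (h2 g hg) hag hcg hca.symm
  subst hgac
  refine Or.inr ⟨a, b, c, hab, hca.symm, ?_, ?_⟩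
  · rintro rfl; exact hcb rfl
  · apply Finset.Subset.antisymm
    · intro h hh
      have hhcard := h2 h hh
      simp only [Finset.mem_insert, Finset.mem_singleton]
      by_cases hah : a ∈ h
      · obtain ⟨w, hwa, hhaw⟩ := exists_pair_of_card_two_of_mem hhcard hah
        subst hhaw
        obtain ⟨z, hz⟩ := hint _ hh _ hf
        rw [Finset.mem_inter] at hz
        rcases Finset.mem_insert.1 hz.1 with rfl | hz1
        · exact absurd hz.2 haf
        · rw [Finset.mem_singleton] at hz1; subst hz1
          rcases Finset.mem_insert.1 hz.2 with rfl | hz2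
          · exact Or.inl rfl
          · rw [Finset.mem_singleton] at hz2; subst hz2
            exact Or.inr (Or.inl rfl)
      · have hbh : b ∈ h := by
          obtain ⟨z, hz⟩ := hint _ hh _ he
          rw [Finset.mem_inter] at hz
          rcases Finset.mem_insert.1 hz.2 with rfl | hz2
          · exact absurd hz.1 hah
          · rw [Finset.mem_singleton] at hz2; subst hz2; exact hz.1
        have hch : c ∈ h := by
          obtain ⟨z, hz⟩ := hint _ hh _ hg
          rw [Finset.mem_inter] at hz
          rcases Finset.mem_insert.1 hz.2 with rfl | hz2
          · exact absurd hz.1 hah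
          · rw [Finset.mem_singleton] at hz2; subst hz2; exact hz.1
        exact Or.inr (Or.inr (pair_eq_of_mem' hhcard hbh hch (fun h' => hcb h'.symm)))
    · intro h hh
      simp only [Finset.mem_insert, Finset.mem_singleton] at hh
      rcases hh with rfl | rfl | rfl
      · exact he
      · exact hg
      · exact hf

open scoped Classical in
lemma le_dimSS {𝒮 𝒯 : Finset (Finset (Finset α))} (h1 : 𝒯 ⊆ 𝒮)
    (hp : ∀ S ∈ 𝒯, ∀ T ∈ 𝒯, S ≠ T → Incompatible S T) : 𝒯.card ≤ dimSS 𝒮 := by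
  apply Finset.le_sup
  simp only [Finset.mem_filter, Finset.mem_powerset]
  exact ⟨h1, hp⟩

open scoped Classical in
lemma dimSS_le {𝒮 : Finset (Finset (Finset α))} {n : ℕ}
    (h : ∀ 𝒯 ⊆ 𝒮, (∀ S ∈ 𝒯, ∀ T ∈ 𝒯, S ≠ T → Incompatible S T) → 𝒯.card ≤ n) :
    dimSS 𝒮 ≤ n := by
  apply Finset.sup_le
  intro 𝒯 h𝒯
  simp only [Finset.mem_filter, Finset.mem_powerset] at h𝒯
  exact h 𝒯 h𝒯.1 h𝒯.2

lemma pair_ne_of_mem_not_mem {a : α} {P Q : Finset α} (h : a ∈ P) (h' : a ∉ Q) : P ≠ Q :=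
  fun e => h' (e ▸ h)

lemma Incompatible.symm' {S T : Finset (Finset α)} (h : Incompatible S T) : Incompatible T S :=
  ⟨h.1.symm, fun A hA B hB => by rw [Finset.inter_comm]; exact h.2 B hB A hA⟩

lemma deg_le_dim {X : Finset α} (hX : 4 ≤ X.card) {𝒮 : Finset (Finset (Finset α))}
    {x : α} (hx : x ∈ X) : degP X 𝒮 x ≤ dimSS 𝒮 := by
  classical
  set N := (X \ {x}).filter fun y => ({{x, y}, X \ {x, y}} : Finset (Finset α)) ∈ 𝒮 with hN
  set f : α → Finset (Finset α) := fun y => {{x, y}, X \ {x, y}} with hf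
  have hNmem : ∀ y ∈ N, y ∈ X ∧ y ≠ x ∧ f y ∈ 𝒮 := by
    intro y hy
    simp only [hN, Finset.mem_filter, Finset.mem_sdiff, Finset.mem_singleton] at hy
    exact ⟨hy.1.1, hy.1.2, hy.2⟩
  have hinj : ∀ y ∈ N, ∀ y' ∈ N, f y = f y' → y = y' := by
    intro y hy y' hy' h
    have h1 : ({x, y} : Finset α) ∈ f y' := by rw [← h]; exact Finset.mem_insert_self _ _
    rcases Finset.mem_insert.1 h1 with h2 | h2
    · have h3 : y ∈ ({x, y'} : Finset α) := h2 ▸ (by simp)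
      rcases Finset.mem_insert.1 h3 with h4 | h4
      · exact absurd h4 (hNmem y hy).2.1
      · exact Finset.mem_singleton.1 h4
    · rw [Finset.mem_singleton] at h2
      have h3 : x ∈ X \ ({x, y'} : Finset α) := h2 ▸ (by simp)
      simp at h3
  have hcard : degP X 𝒮 x = (N.image f).card := by
    rw [Finset.card_image_of_injOn hinj]; rfl
  rw [hcard]
  apply le_dimSS
  · intro S hS
    obtain ⟨y, hy, rfl⟩ := Finset.mem_image.1 hS
    exact (hNmem y hy).2.2
  · intro S hS T hT hST
    obtain ⟨y, hy, rfl⟩ := Finset.mem_image.1 hS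
    obtain ⟨y', hy', rfl⟩ := Finset.mem_image.1 hT
    have hyy' : y ≠ y' := fun h => hST (by rw [h])
    apply inc_pairs hX hx (hNmem y hy).1 hx (hNmem y' hy').1
      (Ne.symm (hNmem y hy).2.1) (Ne.symm (hNmem y' hy').2.1)
    · apply pair_ne_of_mem_not_mem (show y ∈ ({x, y} : Finset α) by simp)
      simp only [Finset.mem_insert, Finset.mem_singleton]
      push_neg
      exact ⟨(hNmem y hy).2.1, hyy'⟩
    · exact ⟨x, by simp⟩

lemma three_le_dim {X : Finset α} (hX : 4 ≤ X.card) {𝒮 : Finset (Finset (Finset α))}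
    (ht : HasTriangle X 𝒮) : 3 ≤ dimSS 𝒮 := by
  obtain ⟨x, hx, y, hy, z, hz, hxy, hxz, hyz, h1, h2, h3⟩ := ht
  set S1 := ({{x, y}, X \ {x, y}} : Finset (Finset α)) with hS1
  set S2 := ({{x, z}, X \ {x, z}} : Finset (Finset α)) with hS2
  set S3 := ({{y, z}, X \ {y, z}} : Finset (Finset α)) with hS3
  have d12 : ({x, y} : Finset α) ≠ {x, z} := by
    apply pair_ne_of_mem_not_mem (show y ∈ ({x, y} : Finset α) by simp)
    simp only [Finset.mem_insert, Finset.mem_singleton]; push_neg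
    exact ⟨Ne.symm hxy, hyz⟩
  have d13 : ({x, y} : Finset α) ≠ {y, z} := by
    apply pair_ne_of_mem_not_mem (show x ∈ ({x, y} : Finset α) by simp)
    simp only [Finset.mem_insert, Finset.mem_singleton]; push_neg
    exact ⟨hxy, hxz⟩
  have d23 : ({x, z} : Finset α) ≠ {y, z} := by
    apply pair_ne_of_mem_not_mem (show x ∈ ({x, z} : Finset α) by simp)
    simp only [Finset.mem_insert, Finset.mem_singleton]; push_neg
    exact ⟨hxy, hxz⟩
  have i12 : Incompatible S1 S2 :=
    inc_pairs hX hx hy hx hz hxy hxz d12 ⟨x, by simp⟩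
  have i13 : Incompatible S1 S3 :=
    inc_pairs hX hx hy hy hz hxy hyz d13 ⟨y, by simp⟩
  have i23 : Incompatible S2 S3 :=
    inc_pairs hX hx hz hy hz hxz hyz d23 ⟨z, by simp⟩
  have hcard : ({S1, S2, S3} : Finset (Finset (Finset α))).card = 3 := by
    rw [Finset.card_insert_of_notMem (by simp [i12.1, i13.1]),
      Finset.card_insert_of_notMem (by simp [i23.1]), Finset.card_singleton]
  calc 3 = ({S1, S2, S3} : Finset (Finset (Finset α))).card := hcard.symm
    _ ≤ dimSS 𝒮 := by
      apply le_dimSS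
      · intro S hS
        simp only [Finset.mem_insert, Finset.mem_singleton] at hS
        rcases hS with rfl | rfl | rfl
        exacts [h1, h2, h3]
      · intro S hS T hT hST
        simp only [Finset.mem_insert, Finset.mem_singleton] at hS hT
        rcases hS with rfl | rfl | rfl <;> rcases hT with rfl | rfl | rfl <;>
          first
            | exact absurd rfl hST
            | exact i12 | exact i13 | exact i23
            | exact i12.symm' | exact i13.symm' | exact i23.symm'

/-- An injective split system whose non-trivial splits have size 2 must contain a
2-split, so the maximum degree of `P(𝒮)` is at least 1. -/
lemma one_le_maxdeg {X : Finset α} (hX : 4 ≤ X.card) {𝒮 : Finset (Finset (Finset α))}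
    (hinj : IsInjective X 𝒮)
    (h2 : ∀ S ∈ 𝒮, IsRSplit X 1 S ∨ IsRSplit X 2 S) :
    1 ≤ X.sup (degP X 𝒮) := by
  classical
  obtain ⟨Y, hYX, hY3⟩ := Finset.exists_subset_card_eq (s := X) (n := 3) (by omega)
  have hXYne : (X \ Y).Nonempty := by
    rw [← Finset.card_pos, Finset.card_sdiff_of_subset hYX]; omega
  obtain ⟨d, hd⟩ := hXYne
  rw [Finset.mem_sdiff] at hd
  obtain ⟨a, b, c, hab, hac, hbc, hYe⟩ := Finset.card_eq_three.1 hY3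
  have haX : a ∈ X := hYX (by rw [hYe]; simp)
  have hbX : b ∈ X := hYX (by rw [hYe]; simp)
  have hda : d ≠ a := fun h => hd.2 (by rw [hYe, h]; simp)
  have hdb : d ≠ b := fun h => hd.2 (by rw [hYe, h]; simp)
  set Y' : Finset α := {a, b, d} with hY'
  have hY'X : Y' ⊆ X := by
    intro z hz
    simp only [hY', Finset.mem_insert, Finset.mem_singleton] at hz
    rcases hz with rfl | rfl | rfl
    exacts [haX, hbX, hd.1]
  have hY'3 : Y'.card = 3 := by
    rw [hY', Finset.card_insert_of_notMem (by simp [hab, Ne.symm hda]),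
      Finset.card_insert_of_notMem (by simp [Ne.symm hdb]), Finset.card_singleton]
  have hYY' : Y ≠ Y' := by
    intro h
    apply hd.2
    rw [h] at hYe ⊢
    rw [hY']
    simp
  obtain ⟨S, hS𝒮, t, ht, t', ht', htt', h2t, h2t'⟩ := hinj Y Y' hYX hY'X hY3 hY'3 hYY'
  have hta : 2 ≤ t.card :=
    le_trans h2t (Finset.card_le_card Finset.inter_subset_right)
  have htb : 2 ≤ t'.card :=
    le_trans h2t' (Finset.card_le_card Finset.inter_subset_right)
  rcases h2 S hS𝒮 with h1 | h1
  · exfalso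
    obtain ⟨A, hA, hA1⟩ := h1.2.1
    obtain ⟨A0, B0, hSe, -, -, -, -⟩ := h1.1
    rw [hSe] at ht ht' hA
    simp only [Finset.mem_insert, Finset.mem_singleton] at ht ht' hA
    rcases ht with rfl | rfl <;> rcases ht' with rfl | rfl <;> rcases hA with rfl | rfl <;>
      first
        | exact htt' rfl
        | omega
  · obtain ⟨P, hPS, hPcard, hPX, hSform⟩ := rsplit2_form h1
    obtain ⟨u, v, huv, hPuv⟩ := Finset.card_eq_two.1 hPcard
    have huX : u ∈ X := hPX (by rw [hPuv]; simp)
    have hvX : v ∈ X := hPX (by rw [hPuv]; simp)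
    have hdeg : 1 ≤ degP X 𝒮 u := by
      have hv : v ∈ (X \ {u}).filter fun y =>
          ({{u, y}, X \ {u, y}} : Finset (Finset α)) ∈ 𝒮 := by
        simp only [Finset.mem_filter, Finset.mem_sdiff, Finset.mem_singleton]
        refine ⟨⟨hvX, Ne.symm huv⟩, ?_⟩
        rw [← hPuv, ← hSform]
        exact hS𝒮
      rw [degP]
      exact Finset.card_pos.2 ⟨v, hv⟩
    exact le_trans hdeg (Finset.le_sup huX)

/-- Upper bound: any pairwise incompatible subfamily is no larger than the maximum
degree, unless it is a triangle of size 3. -/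
lemma ub_card {X : Finset α} (hX : 4 ≤ X.card) {𝒮 : Finset (Finset (Finset α))}
    (h𝒮 : IsSplitSystem X 𝒮)
    (h2 : ∀ S ∈ 𝒮, IsRSplit X 1 S ∨ IsRSplit X 2 S)
    (hD : 1 ≤ X.sup (degP X 𝒮)) :
    ∀ 𝒯 ⊆ 𝒮, (∀ S ∈ 𝒯, ∀ T ∈ 𝒯, S ≠ T → Incompatible S T) →
      𝒯.card ≤ X.sup (degP X 𝒮) ∨ (𝒯.card = 3 ∧ HasTriangle X 𝒮) := by
  classical
  intro 𝒯 hsub hp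
  by_cases hc : 𝒯.card ≤ 1
  · exact Or.inl (le_trans hc hD)
  push_neg at hc
  -- every member of 𝒯 is a 2-split
  have hall : ∀ S ∈ 𝒯, IsRSplit X 2 S := by
    intro S hS
    rcases h2 S (hsub hS) with h1 | h1
    · exfalso
      obtain ⟨T, hT, hTS⟩ := Finset.exists_mem_ne hc S
      have hinc := hp S hS T hT (Ne.symm hTS)
      obtain ⟨A, hA, hA1⟩ := h1.2.1
      obtain ⟨x, rfl⟩ := Finset.card_eq_one.1 hA1
      obtain ⟨C, D', hTe, hUcd, hIcd, -, -⟩ := h𝒮.1 T (hsub hT)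
      have hxX : x ∈ X := by
        obtain ⟨A0, B0, hSe, hU0, -, -, -⟩ := h1.1
        rw [hSe] at hA
        rw [← hU0, Finset.mem_union]
        rcases Finset.mem_insert.1 hA with h | h
        · left; rw [← h]; simp
        · right; rw [Finset.mem_singleton] at h; rw [← h]; simp
      rw [← hUcd, Finset.mem_union] at hxX
      have hCD : ∀ z, z ∈ C → z ∈ D' → False := by
        intro z h1' h2'
        have : z ∈ C ∩ D' := Finset.mem_inter.2 ⟨h1', h2'⟩
        simp [hIcd] at this
      rcases hxX with hxC | hxD
      · apply hinc.2 {x} hA D' (by rw [hTe]; simp)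
        ext z
        simp only [Finset.mem_inter, Finset.mem_singleton, Finset.notMem_empty,
          iff_false, not_and]
        rintro rfl hzD
        exact hCD z hxC hzD
      · apply hinc.2 {x} hA C (by rw [hTe]; simp)
        ext z
        simp only [Finset.mem_inter, Finset.mem_singleton, Finset.notMem_empty,
          iff_false, not_and]
        rintro rfl hzC
        exact hCD z hzC hxD
    · exact h1
  have hch : ∀ S : Finset (Finset α), ∃ P : Finset α,
      S ∈ 𝒯 → (P.card = 2 ∧ P ⊆ X ∧ S = {P, X \ P}) := by
    intro S
    by_cases hS : S ∈ 𝒯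
    · obtain ⟨P, -, hP2, hPX, hSP⟩ := rsplit2_form (hall S hS)
      exact ⟨P, fun _ => ⟨hP2, hPX, hSP⟩⟩
    · exact ⟨∅, fun h => absurd h hS⟩
  choose e he using hch
  have heinj : ∀ S ∈ 𝒯, ∀ T ∈ 𝒯, e S = e T → S = T := by
    intro S hS T hT h
    rw [(he S hS).2.2, (he T hT).2.2, h]
  set ℰ := 𝒯.image e with hℰ
  have hcard : ℰ.card = 𝒯.card := Finset.card_image_of_injOn heinj
  have h2ℰ : ∀ f ∈ ℰ, f.card = 2 := by
    intro f hf
    obtain ⟨S, hS, rfl⟩ := Finset.mem_image.1 hf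
    exact (he S hS).1
  have hXℰ : ∀ f ∈ ℰ, f ⊆ X ∧ ({f, X \ f} : Finset (Finset α)) ∈ 𝒮 := by
    intro f hf
    obtain ⟨S, hS, rfl⟩ := Finset.mem_image.1 hf
    refine ⟨(he S hS).2.1, ?_⟩
    rw [← (he S hS).2.2]
    exact hsub hS
  have hintℰ : ∀ f ∈ ℰ, ∀ g ∈ ℰ, (f ∩ g).Nonempty := by
    intro f hf g hg
    obtain ⟨S, hS, rfl⟩ := Finset.mem_image.1 hf
    obtain ⟨T, hT, rfl⟩ := Finset.mem_image.1 hg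
    by_cases hST : S = T
    · subst hST
      rw [Finset.inter_self]
      rw [← Finset.card_pos, (he S hS).1]; omega
    · have hinc := hp S hS T hT hST
      have hm1 : e S ∈ S := by
        have h := Finset.mem_insert_self (e S) ({X \ e S} : Finset (Finset α))
        rwa [← (he S hS).2.2] at h
      have hm2 : e T ∈ T := by
        have h := Finset.mem_insert_self (e T) ({X \ e T} : Finset (Finset α))
        rwa [← (he T hT).2.2] at h
      rw [Finset.nonempty_iff_ne_empty]
      exact hinc.2 (e S) hm1 (e T) hm2
  obtain ⟨x0, hx0⟩ : X.Nonempty := Finset.card_pos.1 (by omega)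
  rcases star_or_triangle x0 ℰ h2ℰ hintℰ with ⟨x, hx⟩ | ⟨x, y, z, hxy, hxz, hyz, hE⟩
  · left
    obtain ⟨f0, hf0⟩ : ℰ.Nonempty := by rw [← Finset.card_pos, hcard]; omega
    have hxX : x ∈ X := (hXℰ f0 hf0).1 (hx f0 hf0)
    have hdeg : ℰ.card ≤ degP X 𝒮 x := by
      have hch2 : ∀ f : Finset α, ∃ y, f ∈ ℰ → (y ≠ x ∧ f = {x, y}) := by
        intro f
        by_cases hf' : f ∈ ℰ
        · obtain ⟨y, hy, hfy⟩ := exists_pair_of_card_two_of_mem (h2ℰ f hf') (hx f hf')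
          exact ⟨y, fun _ => ⟨hy, hfy⟩⟩
        · exact ⟨x, fun h => absurd h hf'⟩
      choose g hg using hch2
      rw [degP]
      apply Finset.card_le_card_of_injOn g
      · intro f hf'
        obtain ⟨hgx, hfg⟩ := hg f hf'
        simp only [Finset.mem_coe, Finset.mem_filter, Finset.mem_sdiff, Finset.mem_singleton]
        have hgf : g f ∈ f := by
          have h' : g f ∈ ({x, g f} : Finset α) := by simp
          rwa [← hfg] at h'
        refine ⟨⟨(hXℰ f hf').1 hgf, hgx⟩, ?_⟩
        rw [← hfg]
        exact (hXℰ f hf').2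
      · intro f hf' f' hf'' h
        rw [(hg f hf').2, (hg f' hf'').2, h]
    calc 𝒯.card = ℰ.card := hcard.symm
      _ ≤ degP X 𝒮 x := hdeg
      _ ≤ X.sup (degP X 𝒮) := Finset.le_sup hxX
  · right
    have hxyE : ({x, y} : Finset α) ∈ ℰ := by rw [hE]; simp
    have hxzE : ({x, z} : Finset α) ∈ ℰ := by rw [hE]; simp
    have hyzE : ({y, z} : Finset α) ∈ ℰ := by rw [hE]; simp
    have hxX : x ∈ X := (hXℰ _ hxyE).1 (by simp)
    have hyX : y ∈ X := (hXℰ _ hxyE).1 (by simp)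
    have hzX : z ∈ X := (hXℰ _ hxzE).1 (by simp)
    have d12 : ({x, y} : Finset α) ≠ {x, z} := by
      apply pair_ne_of_mem_not_mem (show y ∈ ({x, y} : Finset α) by simp)
      simp only [Finset.mem_insert, Finset.mem_singleton]; push_neg
      exact ⟨Ne.symm hxy, hyz⟩
    have d13 : ({x, y} : Finset α) ≠ {y, z} := by
      apply pair_ne_of_mem_not_mem (show x ∈ ({x, y} : Finset α) by simp)
      simp only [Finset.mem_insert, Finset.mem_singleton]; push_neg
      exact ⟨hxy, hxz⟩
    have d23 : ({x, z} : Finset α) ≠ {y, z} := by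
      apply pair_ne_of_mem_not_mem (show x ∈ ({x, z} : Finset α) by simp)
      simp only [Finset.mem_insert, Finset.mem_singleton]; push_neg
      exact ⟨hxy, hxz⟩
    constructor
    · rw [← hcard, hE]
      rw [Finset.card_insert_of_notMem (by simp [d12, d13]),
        Finset.card_insert_of_notMem (by simp [d23]), Finset.card_singleton]
    · exact ⟨x, hxX, y, hyX, z, hzX, hxy, hxz, hyz,
        (hXℰ _ hxyE).2, (hXℰ _ hxzE).2, (hXℰ _ hyzE).2⟩

/-- Let `𝒮` be an injective split system on `X` (`|X| ≥ 4`) whose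
non-trivial splits all have size 2. (i) If `P(𝒮)` has no 3-clique, then
`dim(𝒮) = max_{x ∈ X} deg_{P(𝒮)}(x)`. (ii) If `P(𝒮)` has a 3-clique, then
`dim(𝒮) = max(max_{x ∈ X} deg_{P(𝒮)}(x), 3)`. -/
theorem statement17 (X : Finset α) (hX : 4 ≤ X.card)
    (𝒮 : Finset (Finset (Finset α))) (h𝒮 : IsSplitSystem X 𝒮)
    (hinj : IsInjective X 𝒮)
    (h2 : ∀ S ∈ 𝒮, IsRSplit X 1 S ∨ IsRSplit X 2 S) :
    (¬ HasTriangle X 𝒮 → dimSS 𝒮 = X.sup (degP X 𝒮)) ∧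
    (HasTriangle X 𝒮 → dimSS 𝒮 = max (X.sup (degP X 𝒮)) 3) := by
  have hD := one_le_maxdeg hX hinj h2
  have hub := ub_card hX h𝒮 h2 hD
  have hlb : X.sup (degP X 𝒮) ≤ dimSS 𝒮 :=
    Finset.sup_le fun x hx => deg_le_dim hX hx
  constructor
  · intro hnt
    apply le_antisymm _ hlb
    apply dimSS_le
    intro 𝒯 hsub hpair
    rcases hub 𝒯 hsub hpair with h | ⟨-, htri⟩
    · exact h
    · exact absurd htri hnt
  · intro ht
    apply le_antisymm
    · apply dimSS_le
      intro 𝒯 hsub hpair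
      rcases hub 𝒯 hsub hpair with h | ⟨h3, -⟩
      · exact le_trans h (le_max_left _ _)
      · exact h3 ▸ le_max_right _ _
    · exact max_le hlb (three_le_dim hX ht)

end InjectiveSplitSystems
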